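/- Let Ω ⊆ ℝ³ be open with coordinates (x, y, t), and let u, S : Ω → ℝ be C² functions with u_x ≠ 0 and S_x ≠ 0 on Ω, satisfying the linear Lax pair relations u_x S_t = (1 − e^{−u_t}) S_x and u_x S_y = e^{−u_t} u_y S_x on Ω. Then u satisfies the dispersionless Toda singular manifold equation u_x u_y u_{tt} = (e^{u_t} − 1)(1 − e^{−u_t}) u_{xy} on Ω. -/

import Mathlib

/-- Partial derivative of `f : ℝⁿ → ℝ` in the `i`-th coordinate direction. -/
noncomputable def pd {n : ℕ} (i : Fin n) (f : (Fin n → ℝ) → ℝ) (x : Fin n → ℝ) : ℝ :=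
  fderiv ℝ f x (Pi.single i 1)

lemma pd_fderiv {n : ℕ} (i : Fin n) (f : (Fin n → ℝ) → ℝ) (X : Fin n → ℝ) :
    fderiv ℝ f X (Pi.single i 1) = pd i f X := rfl

lemma pd_hasFDerivAt {f : (Fin 3 → ℝ) → ℝ} {X : Fin 3 → ℝ} (hf : ContDiffAt ℝ 2 f X)
    (i : Fin 3) :
    HasFDerivAt (pd i f)
      ((ContinuousLinearMap.apply ℝ ℝ (Pi.single i 1)).comp (fderiv ℝ (fderiv ℝ f) X)) X := by
  have h1 : ContDiffAt ℝ 1 (fderiv ℝ f) X := hf.fderiv_right le_rfl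
  have h2 : HasFDerivAt (fderiv ℝ f) (fderiv ℝ (fderiv ℝ f) X) X :=
    (h1.differentiableAt one_ne_zero).hasFDerivAt
  exact ((ContinuousLinearMap.apply ℝ ℝ (Pi.single i 1)).hasFDerivAt).comp X h2

lemma pd_pd_eq {f : (Fin 3 → ℝ) → ℝ} {X : Fin 3 → ℝ} (hf : ContDiffAt ℝ 2 f X)
    (i j : Fin 3) :
    pd j (pd i f) X = fderiv ℝ (fderiv ℝ f) X (Pi.single j 1) (Pi.single i 1) := by
  show fderiv ℝ (pd i f) X (Pi.single j 1) = _
  rw [(pd_hasFDerivAt hf i).fderiv]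
  rfl

lemma pd_symm {f : (Fin 3 → ℝ) → ℝ} {X : Fin 3 → ℝ} (hf : ContDiffAt ℝ 2 f X)
    (i j : Fin 3) : pd j (pd i f) X = pd i (pd j f) X := by
  rw [pd_pd_eq hf i j, pd_pd_eq hf j i]
  exact (hf.isSymmSndFDerivAt (by simp)).eq _ _

lemma lax_deriv1 {p q r s : (Fin 3 → ℝ) → ℝ} {X : Fin 3 → ℝ}
    (hp : DifferentiableAt ℝ p X) (hq : DifferentiableAt ℝ q X)
    (hr : DifferentiableAt ℝ r X) (hs : DifferentiableAt ℝ s X)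
    (h0 : ∀ᶠ Y in nhds X, p Y * q Y = (1 - Real.exp (-(r Y))) * s Y) (w : Fin 3 → ℝ) :
    q X * fderiv ℝ p X w + p X * fderiv ℝ q X w
      = (1 - Real.exp (-(r X))) * fderiv ℝ s X w
        + s X * (Real.exp (-(r X)) * fderiv ℝ r X w) := by
  have hE : HasFDerivAt (fun Y => Real.exp (-(r Y)))
      (Real.exp (-(r X)) • (-(fderiv ℝ r X))) X := (hr.hasFDerivAt.neg).exp
  have hF : HasFDerivAt (fun Y => p Y * q Y - (1 - Real.exp (-(r Y))) * s Y)
      ((p X • fderiv ℝ q X + q X • fderiv ℝ p X)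
        - ((1 - Real.exp (-(r X))) • fderiv ℝ s X
            + s X • (-(Real.exp (-(r X)) • (-(fderiv ℝ r X)))))) X :=
    (hp.hasFDerivAt.mul hq.hasFDerivAt).sub ((hE.const_sub 1).mul hs.hasFDerivAt)
  have h0' : fderiv ℝ (fun Y => p Y * q Y - (1 - Real.exp (-(r Y))) * s Y) X = 0 := by
    have heq : (fun Y => p Y * q Y - (1 - Real.exp (-(r Y))) * s Y) =ᶠ[nhds X]
        (fun _ => (0 : ℝ)) := by
      filter_upwards [h0] with Y hY
      simp [sub_eq_zero.mpr hY]
    rw [heq.fderiv_eq, fderiv_fun_const]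
    rfl
  have hD := hF.fderiv.symm.trans h0'
  have := congrArg (fun L => L w) hD
  simp only [ContinuousLinearMap.add_apply, ContinuousLinearMap.sub_apply,
    ContinuousLinearMap.smul_apply, ContinuousLinearMap.neg_apply, smul_eq_mul,
    ContinuousLinearMap.zero_apply] at this
  linarith [this]

lemma lax_deriv2 {p q r m s : (Fin 3 → ℝ) → ℝ} {X : Fin 3 → ℝ}
    (hp : DifferentiableAt ℝ p X) (hq : DifferentiableAt ℝ q X)
    (hr : DifferentiableAt ℝ r X) (hm : DifferentiableAt ℝ m X)
    (hs : DifferentiableAt ℝ s X)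
    (h0 : ∀ᶠ Y in nhds X, p Y * q Y = Real.exp (-(r Y)) * m Y * s Y) (w : Fin 3 → ℝ) :
    q X * fderiv ℝ p X w + p X * fderiv ℝ q X w
      = Real.exp (-(r X)) * m X * fderiv ℝ s X w
        + s X * (Real.exp (-(r X)) * fderiv ℝ m X w
            - m X * (Real.exp (-(r X)) * fderiv ℝ r X w)) := by
  have hE : HasFDerivAt (fun Y => Real.exp (-(r Y)))
      (Real.exp (-(r X)) • (-(fderiv ℝ r X))) X := (hr.hasFDerivAt.neg).exp
  have hF : HasFDerivAt (fun Y => p Y * q Y - Real.exp (-(r Y)) * m Y * s Y)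
      ((p X • fderiv ℝ q X + q X • fderiv ℝ p X)
        - ((Real.exp (-(r X)) * m X) • fderiv ℝ s X
            + s X • (Real.exp (-(r X)) • fderiv ℝ m X
                + m X • (Real.exp (-(r X)) • (-(fderiv ℝ r X)))))) X :=
    (hp.hasFDerivAt.mul hq.hasFDerivAt).sub ((hE.mul hm.hasFDerivAt).mul hs.hasFDerivAt)
  have h0' : fderiv ℝ (fun Y => p Y * q Y - Real.exp (-(r Y)) * m Y * s Y) X = 0 := by
    have heq : (fun Y => p Y * q Y - Real.exp (-(r Y)) * m Y * s Y) =ᶠ[nhds X]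
        (fun _ => (0 : ℝ)) := by
      filter_upwards [h0] with Y hY
      simp [sub_eq_zero.mpr hY]
    rw [heq.fderiv_eq, fderiv_fun_const]
    rfl
  have hD := hF.fderiv.symm.trans h0'
  have := congrArg (fun L => L w) hD
  simp only [ContinuousLinearMap.add_apply, ContinuousLinearMap.sub_apply,
    ContinuousLinearMap.smul_apply, ContinuousLinearMap.neg_apply, smul_eq_mul,
    ContinuousLinearMap.zero_apply] at this
  linarith [this]

/-- The linear Lax pair `u_x S_t = (1 − e^{−u_t}) S_x`, `u_x S_y = e^{−u_t} u_y S_x`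
implies the dispersionless Toda singular manifold equation
`u_x u_y u_{tt} = (e^{u_t} − 1)(1 − e^{−u_t}) u_{xy}`.
Coordinates on `ℝ³` are `x = 0`, `y = 1`, `t = 2`. -/
theorem linear_lax_pair_implies_dToda
    (Ω : Set (Fin 3 → ℝ)) (hΩ : IsOpen Ω)
    (u S : (Fin 3 → ℝ) → ℝ)
    (hu : ContDiffOn ℝ 2 u Ω) (hS : ContDiffOn ℝ 2 S Ω)
    (hux : ∀ X ∈ Ω, pd 0 u X ≠ 0) (hSx : ∀ X ∈ Ω, pd 0 S X ≠ 0)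
    (hLax1 : ∀ X ∈ Ω,
      pd 0 u X * pd 2 S X = (1 - Real.exp (-(pd 2 u X))) * pd 0 S X)
    (hLax2 : ∀ X ∈ Ω,
      pd 0 u X * pd 1 S X = Real.exp (-(pd 2 u X)) * pd 1 u X * pd 0 S X) :
    ∀ X ∈ Ω,
      pd 0 u X * pd 1 u X * pd 2 (pd 2 u) X
        = (Real.exp (pd 2 u X) - 1) * (1 - Real.exp (-(pd 2 u X))) * pd 1 (pd 0 u) X := by
  intro X hX
  have hmem : Ω ∈ nhds X := hΩ.mem_nhds hX
  have hu2 : ContDiffAt ℝ 2 u X := hu.contDiffAt hmem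
  have hS2 : ContDiffAt ℝ 2 S X := hS.contDiffAt hmem
  have dA : DifferentiableAt ℝ (pd 0 u) X := (pd_hasFDerivAt hu2 0).differentiableAt
  have db : DifferentiableAt ℝ (pd 1 u) X := (pd_hasFDerivAt hu2 1).differentiableAt
  have dc : DifferentiableAt ℝ (pd 2 u) X := (pd_hasFDerivAt hu2 2).differentiableAt
  have dSx : DifferentiableAt ℝ (pd 0 S) X := (pd_hasFDerivAt hS2 0).differentiableAt
  have dSy : DifferentiableAt ℝ (pd 1 S) X := (pd_hasFDerivAt hS2 1).differentiableAt
  have dSt : DifferentiableAt ℝ (pd 2 S) X := (pd_hasFDerivAt hS2 2).differentiableAt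
  have h1ev : ∀ᶠ Y in nhds X,
      pd 0 u Y * pd 2 S Y = (1 - Real.exp (-(pd 2 u Y))) * pd 0 S Y :=
    Filter.eventually_of_mem hmem hLax1
  have h2ev : ∀ᶠ Y in nhds X,
      pd 0 u Y * pd 1 S Y = Real.exp (-(pd 2 u Y)) * pd 1 u Y * pd 0 S Y :=
    Filter.eventually_of_mem hmem hLax2
  have eq1 := lax_deriv1 dA dSt dc dSx h1ev (Pi.single 1 1)
  have eq2 := lax_deriv2 dA dSy dc db dSx h2ev (Pi.single 2 1)
  have eq3 := lax_deriv1 dA dSt dc dSx h1ev (Pi.single 0 1)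
  have eq4 := lax_deriv2 dA dSy dc db dSx h2ev (Pi.single 0 1)
  simp only [pd_fderiv] at eq1 eq2 eq3 eq4
  rw [pd_symm hu2 2 1, pd_symm hS2 2 1] at eq1
  rw [pd_symm hu2 2 0, pd_symm hS2 2 0] at eq3
  rw [pd_symm hu2 1 0, pd_symm hu2 2 0, pd_symm hS2 1 0] at eq4
  have l1 := hLax1 X hX
  have l2 := hLax2 X hX
  have hA := hux X hX
  have hSx' := hSx X hX
  have hEc : Real.exp (pd 2 u X) * Real.exp (-(pd 2 u X)) = 1 := by
    rw [← Real.exp_add]; simp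
  have hz : Real.exp (-(pd 2 u X)) * pd 1 u X * pd 2 S X
      = (1 - Real.exp (-(pd 2 u X))) * pd 1 S X := by
    apply mul_left_cancel₀ hA
    linear_combination (Real.exp (-(pd 2 u X)) * pd 1 u X) * l1
      - (1 - Real.exp (-(pd 2 u X))) * l2
  have key : Real.exp (-(pd 2 u X)) * pd 0 S X
        * (pd 0 u X * pd 1 u X * pd 2 (pd 2 u) X)
      = Real.exp (-(pd 2 u X)) * pd 0 S X
        * ((Real.exp (pd 2 u X) - 1) * (1 - Real.exp (-(pd 2 u X))) * pd 1 (pd 0 u) X) := by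
    linear_combination (-(pd 0 u X)) * eq1 + pd 0 u X * eq2
      + (Real.exp (-(pd 2 u X)) * pd 1 u X) * eq3
      - (1 - Real.exp (-(pd 2 u X))) * eq4
      + pd 1 (pd 0 u) X * l1 - pd 2 (pd 0 u) X * l2
      - pd 0 (pd 0 u) X * hz
      - pd 1 (pd 0 u) X * pd 0 S X * (1 - Real.exp (-(pd 2 u X))) * hEc
  exact mul_left_cancel₀ (mul_ne_zero (Real.exp_ne_zero _) hSx') key
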